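/- arXiv:1307.7119 — 2 statements merged into one kernel-verified Lean document; each statement's English description precedes it below -/
import Mathlib

section
/- Let A₀ be a unital C*-algebra and let A ∈ M_n(A₀) be a normal matrix (A A* = A* A) with bandwidth m ≥ 1. Let f : ℂ → ℂ be continuous on the spectrum σ(A), and let f(A) be defined by the continuous functional calculus for normal elements. Then for every k ≥ 0, every complex polynomial p of degree at most k, and every pair of indices i, j with |i − j| > k·m, one has ‖[f(A)]_{ij}‖ ≤ sup_{z ∈ σ(A)} |f(z) − p(z)|. -/
open Matrix in
lemma stdBasisMatrix_conjT {n : ℕ} {A₀ : Type*} [NonUnitalNonAssocSemiring A₀] [StarRing A₀]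
    (i j : Fin n) (a : A₀) :
    (Matrix.single i j a)ᴴ = Matrix.single j i (star a) := by
  ext r s
  simp only [Matrix.conjTranspose_apply, Matrix.single, Matrix.of_apply,
    apply_ite (star ·), star_zero]
  by_cases h1 : r = j <;> by_cases h2 : s = i <;> simp [h1, h2, and_comm]

open Matrix in
lemma stdBasis_split {n : ℕ} {A₀ : Type*} [Semiring A₀]
    (M : Matrix (Fin n) (Fin n) A₀) (i j : Fin n) :
    Matrix.single i j (M i j) =
      Matrix.single i i (1 : A₀) * M * Matrix.single j j (1 : A₀) := by
  ext r s
  by_cases h1 : r = i <;> by_cases h2 : s = j <;>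
    simp [h1, h2, Matrix.mul_apply, Matrix.single, ite_and, Finset.sum_ite_eq,
      Finset.sum_ite_eq', eq_comm]
  by_cases h3 : i = r <;> by_cases h4 : j = s <;> simp [h3, h4]

open Matrix in
noncomputable def diagEmbed {n : ℕ} {A₀ : Type*} [CStarAlgebra A₀] {𝒜 : Type*} [CStarAlgebra 𝒜]
    (φ : Matrix (Fin n) (Fin n) A₀ ≃⋆ₐ[ℂ] 𝒜) (l : Fin n) : A₀ →⋆ₙₐ[ℂ] 𝒜 where
  toFun a := φ (Matrix.single l l a)
  map_smul' c a := show φ (Matrix.single l l (c • a)) = c • φ (Matrix.single l l a) by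
    rw [← Matrix.smul_single, _root_.map_smul]
  map_zero' := show φ (Matrix.single l l (0 : A₀)) = 0 by
    rw [Matrix.single_zero, map_zero]
  map_add' a b := show φ (Matrix.single l l (a + b)) = _ + _ by
    rw [Matrix.single_add, map_add]
  map_mul' a b := show φ (Matrix.single l l (a * b)) = _ * _ by
    rw [← Matrix.single_mul_single_same (j := l), _root_.map_mul]
  map_star' a := show φ (Matrix.single l l (star a)) = star (φ (Matrix.single l l a)) by
    rw [← map_star]
    congr 1
    rw [Matrix.star_eq_conjTranspose, stdBasisMatrix_conjT]

lemma entry_norm_le {n : ℕ} {A₀ : Type*} [CStarAlgebra A₀] {𝒜 : Type*} [CStarAlgebra 𝒜]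
    (φ : Matrix (Fin n) (Fin n) A₀ ≃⋆ₐ[ℂ] 𝒜) (M : Matrix (Fin n) (Fin n) A₀) (i j : Fin n) :
    ‖M i j‖ ≤ ‖φ M‖ := by
  have hinj : ∀ l : Fin n, Function.Injective (diagEmbed φ l) := by
    intro l a b h
    have h2 := φ.injective h
    have := congrFun (congrFun h2 l) l
    simpa using this
  have hnorm : ∀ (l : Fin n) (a : A₀), ‖φ (Matrix.single l l a)‖ = ‖a‖ := fun l a =>
    NonUnitalStarAlgHom.norm_map (diagEmbed φ l) (hinj l) a
  have key : ∀ a : A₀, ‖φ (Matrix.single i j a)‖ = ‖a‖ := by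
    intro a
    have h1 : ‖φ (Matrix.single i j a)‖ ^ 2 = ‖a‖ ^ 2 := by
      rw [sq, ← CStarRing.norm_star_mul_self (x := φ (Matrix.single i j a)), ← map_star,
        Matrix.star_eq_conjTranspose, stdBasisMatrix_conjT, ← map_mul,
        Matrix.single_mul_single_same, hnorm j, CStarRing.norm_star_mul_self, sq]
    exact sq_eq_sq₀ (norm_nonneg _) (norm_nonneg a) |>.mp h1
  have hproj : ∀ l : Fin n, ‖φ (Matrix.single l l (1 : A₀))‖ ≤ 1 := by
    intro l
    set q := φ (Matrix.single l l (1 : A₀)) with hqdef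
    have hq : star q * q = q := by
      rw [hqdef, ← map_star, Matrix.star_eq_conjTranspose, stdBasisMatrix_conjT, star_one,
        ← map_mul, Matrix.single_mul_single_same, one_mul]
    have h2 : ‖q‖ * ‖q‖ = ‖q‖ := by rw [← CStarRing.norm_star_mul_self, hq]
    nlinarith [norm_nonneg q]
  calc ‖M i j‖ = ‖φ (Matrix.single i j (M i j))‖ := (key _).symm
    _ = ‖φ (Matrix.single i i 1) * φ M * φ (Matrix.single j j 1)‖ := by
        rw [stdBasis_split, map_mul, map_mul]
    _ ≤ ‖φ (Matrix.single i i 1) * φ M‖ * ‖φ (Matrix.single j j 1)‖ :=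
        norm_mul_le _ _
    _ ≤ ‖φ (Matrix.single i i 1)‖ * ‖φ M‖ * ‖φ (Matrix.single j j 1)‖ := by
        gcongr; exact norm_mul_le _ _
    _ ≤ 1 * ‖φ M‖ * 1 := by gcongr <;> [exact hproj i; exact hproj j]
    _ = ‖φ M‖ := by ring
lemma pow_banded_entry {n : ℕ} {A₀ : Type*} [Semiring A₀]
    (A : Matrix (Fin n) (Fin n) A₀) (m : ℕ)
    (hband : ∀ i j : Fin n, (m : ℤ) < |(i : ℤ) - (j : ℤ)| → A i j = 0) :
    ∀ (d : ℕ) (i j : Fin n), ((d * m : ℕ) : ℤ) < |(i : ℤ) - (j : ℤ)| → (A ^ d) i j = 0 := by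
  intro d
  induction d with
  | zero =>
    intro i j h
    simp only [Nat.zero_mul, Nat.cast_zero] at h
    rw [pow_zero]
    have hij : i ≠ j := by
      intro he; subst he; simp at h
    exact Matrix.one_apply_ne hij
  | succ d ih =>
    intro i j h
    rw [pow_succ, Matrix.mul_apply]
    refine Finset.sum_eq_zero fun l _ => ?_
    by_cases hl : ((d * m : ℕ) : ℤ) < |(i : ℤ) - (l : ℤ)|
    · rw [ih i l hl, zero_mul]
    · have htri : |(i : ℤ) - (j : ℤ)| ≤ |(i : ℤ) - (l : ℤ)| + |(l : ℤ) - (j : ℤ)| :=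
        abs_sub_le _ _ _
      have hm : (m : ℤ) < |(l : ℤ) - (j : ℤ)| := by
        push_cast at h hl ⊢
        linarith
      rw [hband l j hm, mul_zero]

/-- Let `A ∈ Mₙ(A₀)` be a *normal* matrix with bandwidth `m ≥ 1`, and let
`f : ℂ → ℂ` be continuous on `σ(A)`.  (The C*-algebra `Mₙ(A₀)` is realized via a
*-isomorphism `φ` onto a C*-algebra `𝒜`, and `f(A) = φ.symm (cfc f (φ A))` is given by the
continuous functional calculus for normal elements; note `σ(φ A) = σ(A)`.)  Then for every
`k ≥ 0`, every complex polynomial `p` of degree at most `k`, and all `i, j` with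
`|i - j| > k·m`, `‖[f(A)]_{ij}‖ ≤ sup_{z ∈ σ(A)} |f(z) - p(z)|`. -/
theorem norm_entry_cfc_le_best_approx_of_banded_normal
    {A₀ : Type*} [CStarAlgebra A₀] {n : ℕ}
    {𝒜 : Type*} [CStarAlgebra 𝒜]
    (φ : Matrix (Fin n) (Fin n) A₀ ≃⋆ₐ[ℂ] 𝒜)
    (A : Matrix (Fin n) (Fin n) A₀) (hA : IsStarNormal A)
    (m : ℕ) (hm : 1 ≤ m)
    (hband : ∀ i j : Fin n, (m : ℤ) < |(i : ℤ) - (j : ℤ)| → A i j = 0)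
    (f : ℂ → ℂ) (hf : ContinuousOn f (spectrum ℂ A))
    (k : ℕ) (p : Polynomial ℂ) (hp : p.degree ≤ k)
    (i j : Fin n) (hij : ((k * m : ℕ) : ℤ) < |(i : ℤ) - (j : ℤ)|) :
    ‖(φ.symm (cfc f (φ A))) i j‖ ≤
      sSup ((fun z => ‖f z - p.eval z‖) '' spectrum ℂ A) := by
  have hAn : IsStarNormal (φ A) := hA.map φ
  have hspec : spectrum ℂ (φ A) = spectrum ℂ A := AlgEquiv.spectrum_eq φ A
  set g : ℂ → ℂ := fun z => f z - p.eval z with hgdef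
  have hf' : ContinuousOn f (spectrum ℂ (φ A)) := hspec ▸ hf
  have hpc : ContinuousOn (fun z => p.eval z) (spectrum ℂ (φ A)) :=
    (Polynomial.continuous p).continuousOn
  -- split cfc
  have hsplit : cfc f (φ A) = cfc g (φ A) + Polynomial.aeval (φ A) p := by
    have h1 : cfc g (φ A) = cfc f (φ A) - cfc (fun z => p.eval z) (φ A) :=
      cfc_sub f (fun z => p.eval z) (φ A) hf' hpc
    rw [h1, cfc_polynomial p (φ A)]
    abel
  -- aeval commutes with φ
  have haev : Polynomial.aeval (φ A) p = φ (Polynomial.aeval A p) :=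
    Polynomial.aeval_algHom_apply (φ : Matrix (Fin n) (Fin n) A₀ ≃⋆ₐ[ℂ] 𝒜) A p
  -- polynomial entry vanishes
  have hnd : p.natDegree ≤ k := Polynomial.natDegree_le_iff_degree_le.mpr hp
  have hpent : (Polynomial.aeval A p) i j = 0 := by
    rw [Polynomial.aeval_eq_sum_range' (Nat.lt_succ_of_le hnd)]
    rw [Matrix.sum_apply]
    refine Finset.sum_eq_zero fun d hd => ?_
    have hdk : d ≤ k := Nat.lt_succ_iff.mp (Finset.mem_range.mp hd)
    have hdm : ((d * m : ℕ) : ℤ) < |(i : ℤ) - (j : ℤ)| := by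
      refine lt_of_le_of_lt ?_ hij
      exact_mod_cast Nat.mul_le_mul_right m hdk
    rw [Matrix.smul_apply, pow_banded_entry A m hband d i j hdm, smul_zero]
  -- rewrite the entry
  have hentry : (φ.symm (cfc f (φ A))) i j = (φ.symm (cfc g (φ A))) i j := by
    rw [hsplit, haev, map_add, φ.symm_apply_apply, Matrix.add_apply, hpent, add_zero]
  rw [hentry]
  -- bound
  have hbdd : BddAbove ((fun z => ‖f z - p.eval z‖) '' spectrum ℂ A) := by
    rw [← hspec]
    exact (spectrum.isCompact (a := φ A)).bddAbove_image (hf'.sub hpc).norm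
  have hsup0 : 0 ≤ sSup ((fun z => ‖f z - p.eval z‖) '' spectrum ℂ A) :=
    Real.sSup_nonneg (by rintro x ⟨z, -, rfl⟩; exact norm_nonneg _)
  calc ‖(φ.symm (cfc g (φ A))) i j‖ ≤ ‖φ (φ.symm (cfc g (φ A)))‖ := entry_norm_le φ _ i j
    _ = ‖cfc g (φ A)‖ := by rw [φ.apply_symm_apply]
    _ ≤ sSup ((fun z => ‖f z - p.eval z‖) '' spectrum ℂ A) := by
        refine norm_cfc_le hsup0 fun x hx => ?_
        exact le_csSup hbdd ⟨x, hspec ▸ hx, rfl⟩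
end

section
/- Let A₀ be a unital C*-algebra and let A ∈ M_n(A₀) be a normal matrix with bandwidth m ≥ 1. Let F ⊂ ℂ be a compact set containing σ(A), let f : ℂ → ℂ be continuous on F, and suppose there exist constants c > 0 and 0 < q < 1 such that for every integer k ≥ 0 there is a complex polynomial p_k of degree at most k with sup_{z∈F} |f(z) − p_k(z)| ≤ c·q^k. Then for all indices i, j, ‖[f(A)]_{ij}‖ ≤ C · q^{|i−j|/m}, where C = max{‖f(A)‖, c/q} and f(A) is defined by the continuous functional calculus for normal elements. -/
open Matrix
open scoped NNReal ENNReal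

section aux

variable {A₀ : Type*} [CStarAlgebra A₀] {n : ℕ}

/-- If `z•1 - stdBasisMatrix j j a` is invertible in matrices, then `z - a` is invertible. -/
lemma isUnit_entry_of_isUnit_matrix {a : A₀} {j : Fin n} {z : ℂ}
    (h : IsUnit (algebraMap ℂ (Matrix (Fin n) (Fin n) A₀) z - Matrix.single j j a)) :
    IsUnit (algebraMap ℂ A₀ z - a) := by
  obtain ⟨u, hu⟩ := h
  set X : Matrix (Fin n) (Fin n) A₀ :=
    algebraMap ℂ (Matrix (Fin n) (Fin n) A₀) z - Matrix.single j j a with hX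
  have key : ∀ B : Matrix (Fin n) (Fin n) A₀,
      (X * B) j j = (algebraMap ℂ A₀ z - a) * B j j := by
    intro B
    rw [Matrix.mul_apply, Finset.sum_eq_single j]
    · simp [hX, Matrix.sub_apply, Matrix.algebraMap_matrix_apply]
    · intro k _ hk
      simp [hX, Matrix.sub_apply, Matrix.algebraMap_matrix_apply, hk, Ne.symm hk,
        Matrix.single_apply_of_ne _ _ _ _ _ (by tauto)]
    · simp
  have key' : ∀ B : Matrix (Fin n) (Fin n) A₀,
      (B * X) j j = B j j * (algebraMap ℂ A₀ z - a) := by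
    intro B
    rw [Matrix.mul_apply, Finset.sum_eq_single j]
    · simp [hX, Matrix.sub_apply, Matrix.algebraMap_matrix_apply]
    · intro k _ hk
      simp [hX, Matrix.sub_apply, Matrix.algebraMap_matrix_apply, hk, Ne.symm hk,
        Matrix.single_apply_of_ne _ _ _ _ _ (by tauto)]
    · simp
  have h1 : X * (u⁻¹).val = 1 := by rw [← hu]; exact u.mul_inv
  have h2 : (u⁻¹).val * X = 1 := by rw [← hu]; exact u.inv_mul
  have e1 : (X * (u⁻¹).val) j j = (algebraMap ℂ A₀ z - a) * (u⁻¹).val j j := key _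
  have e2 : ((u⁻¹).val * X) j j = (u⁻¹).val j j * (algebraMap ℂ A₀ z - a) := key' _
  rw [h1, Matrix.one_apply_eq] at e1
  rw [h2, Matrix.one_apply_eq] at e2
  exact ⟨⟨algebraMap ℂ A₀ z - a, (u⁻¹).val j j, e1.symm, e2.symm⟩, rfl⟩


lemma spectrum_subset_stdBasisMatrix (a : A₀) (j : Fin n) :
    spectrum ℂ a ⊆ spectrum ℂ (Matrix.single j j a) := by
  intro z hz
  rw [spectrum.mem_iff] at hz ⊢
  exact fun h => hz (isUnit_entry_of_isUnit_matrix h)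

lemma spectralRadius_mono {A B : Type*} [Ring A] [Algebra ℂ A] [Ring B] [Algebra ℂ B]
    {a : A} {b : B} (h : spectrum ℂ a ⊆ spectrum ℂ b) :
    spectralRadius ℂ a ≤ spectralRadius ℂ b := by
  simp only [spectralRadius]
  exact iSup₂_le fun k hk => le_iSup₂_of_le k (h hk) le_rfl

lemma stdBasisMatrix_factor (M : Matrix (Fin n) (Fin n) A₀) (i j : Fin n) :
    Matrix.single i j (M i j) =
      Matrix.single i i (1 : A₀) * M * Matrix.single j j (1 : A₀) := by
  ext a b
  by_cases hb : b = j
  · subst hb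
    rw [Matrix.mul_single_apply_same]
    by_cases ha : a = i
    · subst ha
      rw [Matrix.single_mul_apply_same, one_mul, mul_one,
        Matrix.single_apply_same]
    · rw [Matrix.single_mul_apply_of_ne _ _ _ _ _ ha, zero_mul,
        Matrix.single_apply_of_ne _ _ _ _ _ (by tauto)]
  · rw [Matrix.mul_single_apply_of_ne _ _ _ _ _ hb,
      Matrix.single_apply_of_ne _ _ _ _ _ (by tauto)]

lemma star_stdBasisMatrix (i j : Fin n) (a : A₀) :
    star (Matrix.single i j a) = Matrix.single j i (star a) := by
  ext k l
  rw [Matrix.star_eq_conjTranspose, Matrix.conjTranspose_apply]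
  by_cases hk : k = j
  · by_cases hl : l = i
    · subst hk; subst hl
      rw [Matrix.single_apply_same, Matrix.single_apply_same]
    · subst hk
      rw [Matrix.single_apply_of_ne _ _ _ _ _ (by tauto),
        Matrix.single_apply_of_ne _ _ _ _ _ (by tauto), star_zero]
  · rw [Matrix.single_apply_of_ne _ _ _ _ _ (by tauto),
      Matrix.single_apply_of_ne _ _ _ _ _ (by tauto), star_zero]

variable {𝒜 : Type*} [CStarAlgebra 𝒜]

lemma norm_le_one_of_projection {p : 𝒜} (hsa : star p = p) (hid : p * p = p) : ‖p‖ ≤ 1 := by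
  have h : ‖p‖ * ‖p‖ = ‖p‖ := by
    rw [← CStarRing.norm_star_mul_self, hsa, hid]
  nlinarith [norm_nonneg p]

lemma norm_entry_symm_le (φ : Matrix (Fin n) (Fin n) A₀ ≃⋆ₐ[ℂ] 𝒜) (x : 𝒜) (i j : Fin n) :
    ‖(φ.symm x) i j‖ ≤ ‖x‖ := by
  set M : Matrix (Fin n) (Fin n) A₀ := φ.symm x with hM
  set a : A₀ := M i j with ha
  set N : Matrix (Fin n) (Fin n) A₀ := Matrix.single i j a with hN
  set y : 𝒜 := φ N with hy
  -- `‖y‖ ≤ ‖x‖`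
  have hEi : star (φ (Matrix.single i i (1 : A₀))) = φ (Matrix.single i i (1 : A₀)) := by
    rw [← map_star, star_stdBasisMatrix, star_one]
  have hEi2 : φ (Matrix.single i i (1 : A₀)) * φ (Matrix.single i i (1 : A₀))
      = φ (Matrix.single i i (1 : A₀)) := by
    rw [← _root_.map_mul, Matrix.single_mul_single_same, one_mul]
  have hEj : star (φ (Matrix.single j j (1 : A₀))) = φ (Matrix.single j j (1 : A₀)) := by
    rw [← map_star, star_stdBasisMatrix, star_one]
  have hEj2 : φ (Matrix.single j j (1 : A₀)) * φ (Matrix.single j j (1 : A₀))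
      = φ (Matrix.single j j (1 : A₀)) := by
    rw [← _root_.map_mul, Matrix.single_mul_single_same, one_mul]
  have hyx : ‖y‖ ≤ ‖x‖ := by
    have hfac : y = φ (Matrix.single i i (1 : A₀)) * x * φ (Matrix.single j j (1 : A₀)) := by
      rw [hy, hN, ha, stdBasisMatrix_factor, _root_.map_mul, _root_.map_mul, hM, φ.apply_symm_apply]
    calc ‖y‖ ≤ ‖φ (Matrix.single i i (1 : A₀)) * x‖ * ‖φ (Matrix.single j j (1 : A₀))‖ := by
              rw [hfac]; exact norm_mul_le _ _
      _ ≤ ‖φ (Matrix.single i i (1 : A₀))‖ * ‖x‖ * ‖φ (Matrix.single j j (1 : A₀))‖ := by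
          gcongr; exact norm_mul_le _ _
      _ ≤ 1 * ‖x‖ * 1 := by
          gcongr
          · exact norm_le_one_of_projection hEi hEi2
          · exact norm_le_one_of_projection hEj hEj2
      _ = ‖x‖ := by ring
  -- spectral radius argument : ‖a‖ ≤ ‖y‖
  have key : (‖a‖₊ * ‖a‖₊ : ℝ≥0∞) ≤ (‖y‖₊ * ‖y‖₊ : ℝ≥0∞) := by
    calc (‖a‖₊ * ‖a‖₊ : ℝ≥0∞) = (‖star a * a‖₊ : ℝ≥0∞) := by
          rw [CStarRing.nnnorm_star_mul_self]; push_cast; ring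
      _ = spectralRadius ℂ (star a * a) := ((IsSelfAdjoint.star_mul_self a).spectralRadius_eq_nnnorm).symm
      _ ≤ spectralRadius ℂ (Matrix.single j j (star a * a)) :=
          spectralRadius_mono (spectrum_subset_stdBasisMatrix _ j)
      _ = spectralRadius ℂ (star N * N) := by
          rw [hN, star_stdBasisMatrix, Matrix.single_mul_single_same]
      _ = spectralRadius ℂ (star y * y) := by
          rw [hy, ← map_star, ← _root_.map_mul]
          unfold spectralRadius
          rw [AlgEquiv.spectrum_eq φ]
      _ = (‖star y * y‖₊ : ℝ≥0∞) := (IsSelfAdjoint.star_mul_self y).spectralRadius_eq_nnnorm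
      _ = (‖y‖₊ * ‖y‖₊ : ℝ≥0∞) := by rw [CStarRing.nnnorm_star_mul_self]; push_cast; ring
  have hay : ‖a‖ ≤ ‖y‖ := by
    have : ‖a‖₊ * ‖a‖₊ ≤ ‖y‖₊ * ‖y‖₊ := by exact_mod_cast key
    have h2 : ‖a‖ * ‖a‖ ≤ ‖y‖ * ‖y‖ := by exact_mod_cast this
    nlinarith [norm_nonneg a, norm_nonneg y]
  exact hay.trans hyx


lemma pow_band {A : Matrix (Fin n) (Fin n) A₀} {m : ℕ}
    (hband : ∀ i j : Fin n, (m : ℤ) < |(i : ℤ) - (j : ℤ)| → A i j = 0) :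
    ∀ (t : ℕ) (i j : Fin n), ((t * m : ℕ) : ℤ) < |(i : ℤ) - (j : ℤ)| → (A ^ t) i j = 0 := by
  intro t
  induction t with
  | zero =>
    intro i j h
    simp only [Nat.zero_mul, Nat.cast_zero] at h
    have hij : i ≠ j := by
      intro e; subst e; simp at h
    rw [pow_zero]
    exact Matrix.one_apply_ne hij
  | succ t ih =>
    intro i j h
    rw [pow_succ, Matrix.mul_apply]
    apply Finset.sum_eq_zero
    intro k _
    by_cases hk : ((t * m : ℕ) : ℤ) < |(i : ℤ) - (k : ℤ)|
    · rw [ih i k hk, zero_mul]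
    · have htri : |(i : ℤ) - (j : ℤ)| ≤ |(i : ℤ) - (k : ℤ)| + |(k : ℤ) - (j : ℤ)| :=
        abs_sub_le _ _ _
      have : (m : ℤ) < |(k : ℤ) - (j : ℤ)| := by
        push_cast at h hk ⊢
        linarith
      rw [hband k j this, mul_zero]

lemma aeval_band {A : Matrix (Fin n) (Fin n) A₀} {m : ℕ}
    (hband : ∀ i j : Fin n, (m : ℤ) < |(i : ℤ) - (j : ℤ)| → A i j = 0)
    {k : ℕ} {p : Polynomial ℂ} (hdeg : p.natDegree ≤ k) {i j : Fin n}
    (h : ((k * m : ℕ) : ℤ) < |(i : ℤ) - (j : ℤ)|) :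
    (Polynomial.aeval A p) i j = 0 := by
  rw [Polynomial.aeval_eq_sum_range, Matrix.sum_apply]
  apply Finset.sum_eq_zero
  intro t ht
  have ht' : t ≤ k := by
    have := Finset.mem_range.mp ht
    omega
  have : ((t * m : ℕ) : ℤ) < |(i : ℤ) - (j : ℤ)| := by
    refine lt_of_le_of_lt ?_ h
    exact_mod_cast Nat.cast_le.mpr (Nat.mul_le_mul_right m ht')
  rw [Matrix.smul_apply, pow_band hband t i j this, smul_zero]

end aux


/-- Let `A ∈ Mₙ(A₀)` be a normal matrix with bandwidth `m ≥ 1`, let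
`F ⊆ ℂ` be compact with `σ(A) ⊆ F`, let `f : ℂ → ℂ` be continuous on `F`, and suppose there
are `c > 0`, `0 < q < 1` such that for each `k` some complex polynomial of degree at most `k`
approximates `f` on `F` within `c·q^k`.  Then, with `f(A) = φ.symm (cfc f (φ A))`
(continuous functional calculus for normal elements, the C*-structure of `Mₙ(A₀)` realized
via the *-isomorphism `φ`), `‖[f(A)]_{ij}‖ ≤ max{‖f(A)‖, c/q} · q^{|i-j|/m}` for all `i, j`. -/
theorem norm_entry_cfc_le_exp_decay_of_banded_normal
    {A₀ : Type*} [CStarAlgebra A₀] {n : ℕ}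
    {𝒜 : Type*} [CStarAlgebra 𝒜]
    (φ : Matrix (Fin n) (Fin n) A₀ ≃⋆ₐ[ℂ] 𝒜)
    (A : Matrix (Fin n) (Fin n) A₀) (hA : IsStarNormal A)
    (m : ℕ) (hm : 1 ≤ m)
    (hband : ∀ i j : Fin n, (m : ℤ) < |(i : ℤ) - (j : ℤ)| → A i j = 0)
    (F : Set ℂ) (hF : IsCompact F) (hFA : spectrum ℂ A ⊆ F)
    (f : ℂ → ℂ) (hf : ContinuousOn f F)
    (c q : ℝ) (hc : 0 < c) (hq₀ : 0 < q) (hq₁ : q < 1)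
    (happrox : ∀ k : ℕ, ∃ p : Polynomial ℂ, p.degree ≤ k ∧
      ∀ z ∈ F, ‖f z - p.eval z‖ ≤ c * q ^ k)
    (i j : Fin n) :
    ‖(φ.symm (cfc f (φ A))) i j‖ ≤
      max ‖cfc f (φ A)‖ (c / q) * q ^ (|((i : ℕ) : ℝ) - ((j : ℕ) : ℝ)| / (m : ℝ)) := by
  haveI hnormal : IsStarNormal (φ A) := by
    refine ⟨?_⟩
    show star (φ A) * φ A = φ A * star (φ A)
    rw [← map_star, ← _root_.map_mul, ← _root_.map_mul]
    exact congrArg φ hA.star_comm_self.eq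
  have hspec : spectrum ℂ (φ A) ⊆ F := by
    rw [AlgEquiv.spectrum_eq φ A]; exact hFA
  set d : ℕ := ((i : ℤ) - (j : ℤ)).natAbs with hd
  have habsZ : |(i : ℤ) - (j : ℤ)| = (d : ℤ) := Int.abs_eq_natAbs _
  have habs : |((i : ℕ) : ℝ) - ((j : ℕ) : ℝ)| = (d : ℝ) := by
    rw [show ((i : ℕ) : ℝ) - ((j : ℕ) : ℝ) = (((i : ℤ) - (j : ℤ) : ℤ) : ℝ) by push_cast; ring,
      ← Int.cast_abs, habsZ, Int.cast_natCast]
  rw [habs]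
  by_cases hd0 : d = 0
  · rw [hd0]
    simp only [Nat.cast_zero, zero_div, Real.rpow_zero, mul_one]
    exact le_trans (norm_entry_symm_le φ _ i j) (le_max_left _ _)
  · -- choose the polynomial degree
    set k : ℕ := (d - 1) / m with hk
    obtain ⟨p, hdeg, hp⟩ := happrox k
    have hdegn : p.natDegree ≤ k := Polynomial.natDegree_le_iff_degree_le.mpr hdeg
    have hm0 : 0 < m := hm
    have hkm : k * m < d := by
      have h1 : k * m ≤ d - 1 := Nat.div_mul_le_self (d - 1) m
      omega
    have hPij : (Polynomial.aeval A p) i j = 0 := by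
      refine aeval_band hband hdegn ?_
      rw [habsZ]; exact_mod_cast hkm
    have hmain : (φ.symm (cfc f (φ A))) i j
        = (φ.symm (cfc f (φ A) - φ (Polynomial.aeval A p))) i j := by
      rw [map_sub, φ.symm_apply_apply, Matrix.sub_apply, hPij, sub_zero]
    have h2 : φ (Polynomial.aeval A p) = Polynomial.aeval (φ A) p :=
      (Polynomial.aeval_algHom_apply φ A p).symm
    have hfs : ContinuousOn f (spectrum ℂ (φ A)) := hf.mono hspec
    have hgs : ContinuousOn (fun z : ℂ => p.eval z) (spectrum ℂ (φ A)) :=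
      p.continuous.continuousOn
    have h3 : cfc f (φ A) - φ (Polynomial.aeval A p)
        = cfc (fun z => f z - p.eval z) (φ A) := by
      rw [h2, ← cfc_polynomial p (φ A), ← cfc_sub f (fun z : ℂ => p.eval z) (φ A) hfs hgs]
    have h5 : ‖cfc (fun z => f z - p.eval z) (φ A)‖ ≤ c * q ^ k := by
      refine norm_cfc_le (by positivity) ?_
      exact fun z hz => hp z (hspec hz)
    have hstep : ‖(φ.symm (cfc f (φ A))) i j‖ ≤ c * q ^ k := by
      rw [hmain]
      exact le_trans (norm_entry_symm_le φ _ i j) (h3 ▸ h5)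
    -- arithmetic
    have hdle : (d : ℝ) ≤ ((k : ℝ) + 1) * m := by
      have h1 : m * k + (d - 1) % m = d - 1 := by rw [hk]; exact Nat.div_add_mod (d - 1) m
      have h2 : (d - 1) % m < m := Nat.mod_lt _ hm0
      have h3 : d ≤ m * k + m := by omega
      have h3' : (d : ℝ) ≤ (m : ℝ) * k + m := by exact_mod_cast h3
      nlinarith [h3']
    have hd1 : (d : ℝ) / m - 1 ≤ (k : ℝ) := by
      have hmpos : (0:ℝ) < m := by exact_mod_cast hm0
      rw [sub_le_iff_le_add, div_le_iff₀ hmpos]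
      nlinarith [hdle]
    have hqk : q ^ k ≤ q ^ ((d : ℝ) / m) / q := by
      have h1 : (q : ℝ) ^ (k : ℝ) ≤ q ^ ((d : ℝ) / m - 1) :=
        Real.rpow_le_rpow_of_exponent_ge hq₀ hq₁.le hd1
      rw [Real.rpow_sub hq₀, Real.rpow_one] at h1
      rw [← Real.rpow_natCast q k]
      exact h1
    calc ‖(φ.symm (cfc f (φ A))) i j‖ ≤ c * q ^ k := hstep
      _ ≤ c * (q ^ ((d : ℝ) / m) / q) := by
          exact mul_le_mul_of_nonneg_left hqk hc.le
      _ = (c / q) * q ^ ((d : ℝ) / m) := by ring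
      _ ≤ max ‖cfc f (φ A)‖ (c / q) * q ^ ((d : ℝ) / m) := by
          exact mul_le_mul_of_nonneg_right (le_max_right _ _)
            (Real.rpow_nonneg hq₀.le _)
end
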